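/- Let C be a groupoid and N a normal subgroupoid of C. Then there exist a groupoid D and a functor π : C ⥤ D such that: (i) π is surjective on objects; (ii) π is full (surjective on hom-sets); (iii) for all objects c, d of C, π.obj c = π.obj d if and only if N.arrows c d is nonempty; and (iv) for all objects c, d of C and all arrows g, h : c ⟶ d, π.map g = π.map h if and only if there exist n₁ ∈ N.arrows c c and n₂ ∈ N.arrows d d with h = n₁ ≫ g ≫ n₂. (This is the quotient groupoid G/∼ over P/∼₀ determined by the normal subgroupoid N.) -/

import Mathlib

open CategoryTheory

universe u v

namespace QuotGpdAux

variable {C : Type u} [Groupoid.{v} C]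

/-- Setoid on objects: two objects are related iff there is an arrow of `N` joining them. -/
def objSetoid (N : Subgroupoid C) (hN : N.IsNormal) : Setoid (ULift.{v} C) where
  r c d := (N.arrows c.down d.down).Nonempty
  iseqv := by
    refine ⟨fun c => ⟨𝟙 _, hN.wide _⟩, ?_, ?_⟩
    · rintro c d ⟨n, hn⟩; exact ⟨Groupoid.inv n, N.inv hn⟩
    · rintro c d e ⟨m, hm⟩ ⟨n, hn⟩; exact ⟨m ≫ n, N.mul hm hn⟩

variable (N : Subgroupoid C) (hN : N.IsNormal)

def QObj := Quotient (objSetoid N hN)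

def mkObj (c : C) : QObj N hN := Quotient.mk _ (ULift.up c)

noncomputable def conn {c d : C} (h : mkObj N hN c = mkObj N hN d) : c ⟶ d :=
  (Quotient.exact h).choose

lemma conn_mem {c d : C} (h : mkObj N hN c = mkObj N hN d) : conn N hN h ∈ N.arrows c d :=
  (Quotient.exact h).choose_spec

/-- Representative of an arrow of the quotient groupoid. -/
structure Rep (x y : QObj N hN) where
  src : C
  tgt : C
  hom : src ⟶ tgt
  hsrc : mkObj N hN src = x
  htgt : mkObj N hN tgt = y

def homSetoid (x y : QObj N hN) : Setoid (Rep N hN x y) where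
  r p q := ∃ u ∈ N.arrows q.src p.src, ∃ v ∈ N.arrows p.tgt q.tgt,
    q.hom = u ≫ p.hom ≫ v
  iseqv := by
    refine ⟨fun p => ⟨𝟙 _, hN.wide _, 𝟙 _, hN.wide _, by simp⟩, ?_, ?_⟩
    · rintro p q ⟨u, hu, v, hv, he⟩
      exact ⟨Groupoid.inv u, N.inv hu, Groupoid.inv v, N.inv hv, by simp [he]⟩
    · rintro p q r ⟨u, hu, v, hv, he⟩ ⟨u', hu', v', hv', he'⟩
      exact ⟨u' ≫ u, N.mul hu' hu, v ≫ v', N.mul hv hv', by simp [he', he]⟩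

noncomputable def repId (x : QObj N hN) : Rep N hN x x :=
  ⟨x.out.down, x.out.down, 𝟙 _, x.out_eq, x.out_eq⟩

noncomputable def repComp {x y z : QObj N hN} (p : Rep N hN x y) (q : Rep N hN y z) : Rep N hN x z :=
  ⟨p.src, q.tgt, p.hom ≫ conn N hN (p.htgt.trans q.hsrc.symm) ≫ q.hom, p.hsrc, q.htgt⟩

def repInv {x y : QObj N hN} (p : Rep N hN x y) : Rep N hN y x :=
  ⟨p.tgt, p.src, Groupoid.inv p.hom, p.htgt, p.hsrc⟩

lemma repComp_sound {x y z : QObj N hN} {p p' : Rep N hN x y} {q q' : Rep N hN y z}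
    (hp : (homSetoid N hN x y).r p p') (hq : (homSetoid N hN y z).r q q') :
    (homSetoid N hN x z).r (repComp N hN p q) (repComp N hN p' q') := by
  obtain ⟨u, hu, v, hv, he⟩ := hp
  obtain ⟨s, hs, t, ht, he'⟩ := hq
  set w := conn N hN (p.htgt.trans q.hsrc.symm) with hw
  set w' := conn N hN (p'.htgt.trans q'.hsrc.symm) with hw'
  have hm : v ≫ w' ≫ s ∈ N.arrows p.tgt q.src :=
    N.mul hv (N.mul (conn_mem N hN _) hs)
  have hn : Groupoid.inv w ≫ (v ≫ w' ≫ s) ∈ N.arrows q.src q.src :=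
    N.mul (N.inv (conn_mem N hN _)) hm
  refine ⟨u, hu, (Groupoid.inv q.hom ≫ (Groupoid.inv w ≫ (v ≫ w' ≫ s)) ≫ q.hom) ≫ t,
    N.mul (hN.conj q.hom hn) ht, ?_⟩
  show p'.hom ≫ w' ≫ q'.hom = _
  simp only [repComp, he, he', Category.assoc]
  simp

noncomputable instance gpd : Groupoid.{max u v} (QObj N hN) where
  Hom x y := Quotient (homSetoid N hN x y)
  id x := Quotient.mk _ (repId N hN x)
  comp {x y z} f g := Quotient.lift₂
    (fun p q => Quotient.mk (homSetoid N hN x z) (repComp N hN p q))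
    (fun _ _ _ _ h h' => Quotient.sound (repComp_sound N hN h h')) f g
  id_comp {x y} f := by
    refine Quotient.inductionOn f (fun p => Quotient.sound ?_)
    set w := conn N hN (((repId N hN x).htgt).trans p.hsrc.symm) with hw
    exact ⟨Groupoid.inv w, N.inv (conn_mem N hN _), 𝟙 _, hN.wide _, by
      show p.hom = _ ≫ (𝟙 _ ≫ w ≫ p.hom) ≫ _; simp [repComp, repId]
      exact (show ∀ {a b c : C} (w : a ⟶ b) (h : b ⟶ c), h = Groupoid.inv w ≫ w ≫ h from
        fun w h => by simp) w p.hom⟩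
  comp_id {x y} f := by
    refine Quotient.inductionOn f (fun p => Quotient.sound ?_)
    set w := conn N hN (p.htgt.trans ((repId N hN y).hsrc).symm) with hw
    exact ⟨𝟙 _, hN.wide _, Groupoid.inv w, N.inv (conn_mem N hN _), by
      show p.hom = 𝟙 _ ≫ (p.hom ≫ w ≫ 𝟙 _) ≫ _; simp [repComp, repId]
      exact (show ∀ {a b c : C} (h : a ⟶ b) (w : b ⟶ c), h = h ≫ (w ≫ 𝟙 c) ≫ Groupoid.inv w from
        fun h w => by simp) p.hom w⟩
  assoc {w x y z} f g h := by
    refine Quotient.inductionOn₃ f g h (fun p q r => Quotient.sound ?_)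
    exact ⟨𝟙 _, hN.wide _, 𝟙 _, hN.wide _, by
      show _ ≫ _ ≫ _ = _; simp [repComp]⟩
  inv {x y} f := Quotient.lift
    (fun p => Quotient.mk (homSetoid N hN y x) (repInv N hN p))
    (by
      rintro p q ⟨u, hu, v, hv, he⟩
      refine Quotient.sound ⟨Groupoid.inv v, N.inv hv, Groupoid.inv u, N.inv hu, ?_⟩
      show Groupoid.inv q.hom = Groupoid.inv v ≫ Groupoid.inv p.hom ≫ Groupoid.inv u
      simp [he]) f
  inv_comp {x y} f := by
    refine Quotient.inductionOn f (fun p => Quotient.sound ?_)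
    set w := conn N hN ((repInv N hN p).htgt.trans p.hsrc.symm) with hww
    have hm : Groupoid.inv p.hom ≫ w ≫ p.hom ∈ N.arrows p.tgt p.tgt :=
      hN.conj p.hom (conn_mem N hN _)
    set u := conn N hN ((repId N hN y).htgt.trans p.htgt.symm) with hu
    refine ⟨u, conn_mem N hN _,
      Groupoid.inv (Groupoid.inv p.hom ≫ w ≫ p.hom) ≫ Groupoid.inv u,
      N.mul (N.inv hm) (N.inv (conn_mem N hN _)), ?_⟩
    show 𝟙 _ = u ≫ (Groupoid.inv p.hom ≫ w ≫ p.hom) ≫ Groupoid.inv (Groupoid.inv p.hom ≫ w ≫ p.hom) ≫ Groupoid.inv u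
    simp
  comp_inv {x y} f := by
    refine Quotient.inductionOn f (fun p => Quotient.sound ?_)
    set w := conn N hN (p.htgt.trans (repInv N hN p).hsrc.symm) with hww
    have hm : p.hom ≫ w ≫ Groupoid.inv p.hom ∈ N.arrows p.src p.src :=
      hN.conj' p.hom (conn_mem N hN _)
    set u := conn N hN ((repId N hN x).htgt.trans p.hsrc.symm) with hu
    refine ⟨u, conn_mem N hN _,
      Groupoid.inv (p.hom ≫ w ≫ Groupoid.inv p.hom) ≫ Groupoid.inv u,
      N.mul (N.inv hm) (N.inv (conn_mem N hN _)), ?_⟩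
    show 𝟙 _ = u ≫ (p.hom ≫ w ≫ Groupoid.inv p.hom) ≫ Groupoid.inv (p.hom ≫ w ≫ Groupoid.inv p.hom) ≫ Groupoid.inv u
    simp

noncomputable def π : C ⥤ QObj N hN where
  obj := mkObj N hN
  map {c d} f := Quotient.mk _ (⟨c, d, f, rfl, rfl⟩ : Rep N hN _ _)
  map_id c := by
    refine Quotient.sound ?_
    set u := conn N hN ((repId N hN (mkObj N hN c)).htgt.trans (rfl : mkObj N hN c = _).symm)
      with hu
    exact ⟨u, conn_mem N hN _, Groupoid.inv u, N.inv (conn_mem N hN _), by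
      simp [repId]; exact (Groupoid.comp_inv u).symm⟩
  map_comp {c d e} f g := by
    refine (Quotient.sound ?_).symm
    set w := conn N hN ((rfl : mkObj N hN d = _).trans (rfl : mkObj N hN d = _).symm) with hw
    refine ⟨𝟙 _, hN.wide _, Groupoid.inv g ≫ Groupoid.inv w ≫ g,
      hN.conj g (N.inv (conn_mem N hN _)), ?_⟩
    show f ≫ g = 𝟙 _ ≫ (f ≫ w ≫ g) ≫ Groupoid.inv g ≫ Groupoid.inv w ≫ g
    simp

end QuotGpdAux

/-- Quotient of a groupoid by a normal subgroupoid: there is a groupoid `D` and a functor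
`π : C ⥤ D`, surjective on objects and on hom-sets, identifying two objects iff they are
joined by an arrow of `N`, and identifying two parallel arrows `g, h` iff
`h = n₁ ≫ g ≫ n₂` for loops `n₁, n₂` of `N`. -/
theorem stmt_3 {C : Type u} [Groupoid.{v} C] (N : Subgroupoid C) (hN : N.IsNormal) :
    ∃ (D : Type (max u v)) (_ : Groupoid.{max u v} D) (π : C ⥤ D),
      Function.Surjective π.obj ∧
      (∀ c d : C, Function.Surjective fun g : c ⟶ d => π.map g) ∧
      (∀ c d : C, π.obj c = π.obj d ↔ (N.arrows c d).Nonempty) ∧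
      (∀ (c d : C) (g h : c ⟶ d), π.map g = π.map h ↔
        ∃ n₁ ∈ N.arrows c c, ∃ n₂ ∈ N.arrows d d, h = n₁ ≫ g ≫ n₂) := by
  classical
  refine ⟨QuotGpdAux.QObj N hN, inferInstance, QuotGpdAux.π N hN, ?_, ?_, ?_, ?_⟩
  · intro x
    exact ⟨x.out.down, x.out_eq⟩
  · intro c d φ
    refine Quotient.inductionOn φ (fun p => ?_)
    refine ⟨QuotGpdAux.conn N hN p.hsrc.symm ≫ p.hom ≫ QuotGpdAux.conn N hN p.htgt, ?_⟩
    refine Quotient.sound ?_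
    refine ⟨Groupoid.inv (QuotGpdAux.conn N hN p.hsrc.symm),
      N.inv (QuotGpdAux.conn_mem N hN _),
      Groupoid.inv (QuotGpdAux.conn N hN p.htgt),
      N.inv (QuotGpdAux.conn_mem N hN _), by simp⟩
  · intro c d
    constructor
    · intro h; exact Quotient.exact h
    · rintro ⟨n, hn⟩; exact Quotient.sound ⟨n, hn⟩
  · intro c d g h
    constructor
    · intro he
      obtain ⟨u, hu, v, hv, he⟩ := Quotient.exact he
      exact ⟨u, hu, v, hv, he⟩
    · rintro ⟨u, hu, v, hv, he⟩
      exact Quotient.sound ⟨u, hu, v, hv, he⟩
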